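/- arXiv:1311.4334 — 3 statements merged into one kernel-verified Lean document; each statement's English description precedes it below -/
import Mathlib

section
/- With U = λA₁ + A₂ (A₁ = diag(−i,i), A₂ off-diagonal with entries q, r) and V = λ³A₁ + λ²A₂ + λh₁ + h₀, where h₁ has diagonal (−(i/2)qr, (i/2)qr) and off-diagonal ((i/2)q_x, −(i/2)r_x), and h₀ has diagonal ((1/4)(r q_x − q r_x), −(1/4)(r q_x − q r_x)) and off-diagonal ((1/2)q²r − (1/4)q_xx, (1/2)q r² − (1/4)r_xx), the zero-curvature equation U_t − V_x + [U,V] = 0 holds identically in λ if and only if q_t = −(1/4)q_xxx + (3/2) q q_x r and r_t = −(1/4)r_xxx + (3/2) r r_x q. -/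
set_option maxHeartbeats 2000000


open Complex Matrix

/-- Zero-curvature formulation of the coupled KdV-type NLS equations:
with `U = λA₁ + A₂` and `V = λ³A₁ + λ²A₂ + λh₁ + h₀` as in the text, the zero-curvature
equation `U_t − V_x + [U,V] = 0` holds identically in `λ` iff
`q_t = −(1/4)q_xxx + (3/2) q q_x r` and `r_t = −(1/4)r_xxx + (3/2) r r_x q`. -/
theorem coupled_kdv_nls_zero_curvature
    (q r qx rx qxx rxx qxxx rxxx qt rt : ℝ → ℝ → ℂ)
    (hqx : ∀ x t, HasDerivAt (fun x' => q x' t) (qx x t) x)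
    (hrx : ∀ x t, HasDerivAt (fun x' => r x' t) (rx x t) x)
    (hqxx : ∀ x t, HasDerivAt (fun x' => qx x' t) (qxx x t) x)
    (hrxx : ∀ x t, HasDerivAt (fun x' => rx x' t) (rxx x t) x)
    (hqxxx : ∀ x t, HasDerivAt (fun x' => qxx x' t) (qxxx x t) x)
    (hrxxx : ∀ x t, HasDerivAt (fun x' => rxx x' t) (rxxx x t) x)
    (hqt : ∀ x t, HasDerivAt (fun t' => q x t') (qt x t) t)
    (hrt : ∀ x t, HasDerivAt (fun t' => r x t') (rt x t) t) :
    let A1 : Matrix (Fin 2) (Fin 2) ℂ := !![-I, 0; 0, I]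
    let A2 : ℝ → ℝ → Matrix (Fin 2) (Fin 2) ℂ := fun x t => !![0, q x t; r x t, 0]
    let h1 : ℝ → ℝ → Matrix (Fin 2) (Fin 2) ℂ := fun x t =>
      !![-(I / 2) * q x t * r x t, (I / 2) * qx x t;
         -(I / 2) * rx x t, (I / 2) * q x t * r x t]
    let h0 : ℝ → ℝ → Matrix (Fin 2) (Fin 2) ℂ := fun x t =>
      !![(1 / 4 : ℂ) * (r x t * qx x t - q x t * rx x t),
           (1 / 2 : ℂ) * (q x t) ^ 2 * r x t - (1 / 4 : ℂ) * qxx x t;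
         (1 / 2 : ℂ) * q x t * (r x t) ^ 2 - (1 / 4 : ℂ) * rxx x t,
           -(1 / 4 : ℂ) * (r x t * qx x t - q x t * rx x t)]
    let U : ℂ → ℝ → ℝ → Matrix (Fin 2) (Fin 2) ℂ := fun l x t => l • A1 + A2 x t
    let V : ℂ → ℝ → ℝ → Matrix (Fin 2) (Fin 2) ℂ := fun l x t =>
      (l ^ 3) • A1 + (l ^ 2) • A2 x t + l • h1 x t + h0 x t
    let Ut : ℝ → ℝ → Matrix (Fin 2) (Fin 2) ℂ := fun x t => !![0, qt x t; rt x t, 0]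
    let Vx : ℂ → ℝ → ℝ → Matrix (Fin 2) (Fin 2) ℂ := fun l x t =>
      (l ^ 2) • !![0, qx x t; rx x t, 0] +
        l • !![-(I / 2) * (qx x t * r x t + q x t * rx x t), (I / 2) * qxx x t;
               -(I / 2) * rxx x t, (I / 2) * (qx x t * r x t + q x t * rx x t)] +
        !![(1 / 4 : ℂ) * (rx x t * qx x t + r x t * qxx x t - qx x t * rx x t - q x t * rxx x t),
             (1 / 2 : ℂ) * (2 * q x t * qx x t * r x t + (q x t) ^ 2 * rx x t) -
               (1 / 4 : ℂ) * qxxx x t;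
           (1 / 2 : ℂ) * (qx x t * (r x t) ^ 2 + 2 * q x t * r x t * rx x t) -
             (1 / 4 : ℂ) * rxxx x t,
             -(1 / 4 : ℂ) * (rx x t * qx x t + r x t * qxx x t - qx x t * rx x t - q x t * rxx x t)]
    (∀ (l : ℂ) (x t : ℝ),
        Ut x t - Vx l x t + (U l x t * V l x t - V l x t * U l x t) = 0) ↔
      (∀ x t : ℝ,
        qt x t = -(1 / 4 : ℂ) * qxxx x t + (3 / 2 : ℂ) * q x t * qx x t * r x t ∧
          rt x t = -(1 / 4 : ℂ) * rxxx x t + (3 / 2 : ℂ) * r x t * rx x t * q x t) := by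
  intro A1 A2 h1 h0 U V Ut Vx
  constructor
  · intro h x t
    have h0' := h 0 x t
    have e01 := congrFun (congrFun h0' 0) 1
    have e10 := congrFun (congrFun h0' 1) 0
    simp [A1, A2, h1, h0, U, V, Ut, Vx, Matrix.mul_apply, Fin.sum_univ_two] at e01 e10
    constructor
    · linear_combination e01
    · linear_combination e10
  · intro h l x t
    obtain ⟨hq, hr⟩ := h x t
    ext i j
    fin_cases i <;> fin_cases j <;>
      simp [A1, A2, h1, h0, U, V, Ut, Vx, Matrix.mul_apply, Fin.sum_univ_two]
    all_goals try ring_nf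
    all_goals try simp only [Complex.I_sq]
    · linear_combination hq
    · linear_combination hr
end

section
/- With the AKNS recursion data above, defining (λⁿV)₊ = Σ_{m=0}^n λ^{n−m}(a_m σ₃ + b_m σ₊ + c_m σ₋) and U = −iλσ₃ + qσ₊ + rσ₋, the matrix (λⁿV)₊,x − [U, (λⁿV)₊] equals −2i b_{n+1} σ₊ + 2i c_{n+1} σ₋; in particular it contains no σ₃ component and no positive powers of λ. -/
open Complex Matrix Finset

private lemma akns_key (l : ℂ) (f : ℕ → ℂ) (hf : f 0 = 0) (n : ℕ) :
    l * ∑ m ∈ range (n + 1), l ^ (n - m) * f m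
      = (∑ m ∈ range (n + 1), l ^ (n - m) * f (m + 1)) - f (n + 1) := by
  induction n with
  | zero => simp [hf]
  | succ n ih =>
    have h1 : ∑ m ∈ range (n + 2), l ^ (n + 1 - m) * f m
        = (l * ∑ m ∈ range (n + 1), l ^ (n - m) * f m) + f (n + 1) := by
      rw [Finset.sum_range_succ, Finset.mul_sum]
      congr 1
      · refine Finset.sum_congr rfl fun m hm => ?_
        rw [Finset.mem_range] at hm
        have h : n + 1 - m = (n - m) + 1 := by omega
        rw [h, pow_succ]; ring
      · simp
    have h2 : ∑ m ∈ range (n + 2), l ^ (n + 1 - m) * f (m + 1)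
        = (l * ∑ m ∈ range (n + 1), l ^ (n - m) * f (m + 1)) + f (n + 2) := by
      rw [Finset.sum_range_succ, Finset.mul_sum]
      congr 1
      · refine Finset.sum_congr rfl fun m hm => ?_
        rw [Finset.mem_range] at hm
        have h : n + 1 - m = (n - m) + 1 := by omega
        rw [h, pow_succ]; ring
      · simp
    rw [h1, h2]
    linear_combination l * ih

/-- With the AKNS recursion data, `(λⁿV)₊,x − [U, (λⁿV)₊] = −2i b_{n+1} σ₊ + 2i c_{n+1} σ₋`:
in particular it has no `σ₃` component and no positive powers of `λ`. -/
theorem akns_truncation_identity (n : ℕ) (α : ℂ) (q r : ℝ → ℂ) (a b c : ℕ → ℝ → ℂ)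
    (ha : ∀ m x, HasDerivAt (a m) (q x * c m x - r x * b m x) x)
    (hb : ∀ m x, HasDerivAt (b m) (-2 * I * b (m + 1) x - 2 * q x * a m x) x)
    (hc : ∀ m x, HasDerivAt (c m) (2 * I * c (m + 1) x + 2 * r x * a m x) x)
    (ha0 : ∀ x, a 0 x = α) (hb0 : ∀ x, b 0 x = 0) (hc0 : ∀ x, c 0 x = 0) :
    let s3 : Matrix (Fin 2) (Fin 2) ℂ := !![1, 0; 0, -1]
    let sp : Matrix (Fin 2) (Fin 2) ℂ := !![0, 1; 0, 0]
    let sm : Matrix (Fin 2) (Fin 2) ℂ := !![0, 0; 1, 0]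
    let U : ℂ → ℝ → Matrix (Fin 2) (Fin 2) ℂ := fun l x =>
      (-I * l) • s3 + q x • sp + r x • sm
    let W : ℂ → ℝ → Matrix (Fin 2) (Fin 2) ℂ := fun l x =>
      ∑ m ∈ range (n + 1),
        (l ^ (n - m)) • (a m x • s3 + b m x • sp + c m x • sm)
    let Wx : ℂ → ℝ → Matrix (Fin 2) (Fin 2) ℂ := fun l x =>
      ∑ m ∈ range (n + 1),
        (l ^ (n - m)) • (deriv (a m) x • s3 + deriv (b m) x • sp + deriv (c m) x • sm)
    ∀ (l : ℂ) (x : ℝ),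
      Wx l x - (U l x * W l x - W l x * U l x) =
        (-2 * I * b (n + 1) x) • sp + (2 * I * c (n + 1) x) • sm := by
  intro s3 sp sm U W Wx l x
  -- abbreviations
  have hWe : W l x = !![∑ m ∈ range (n + 1), l ^ (n - m) * a m x,
        ∑ m ∈ range (n + 1), l ^ (n - m) * b m x;
        ∑ m ∈ range (n + 1), l ^ (n - m) * c m x,
        -∑ m ∈ range (n + 1), l ^ (n - m) * a m x] := by
    ext i j
    fin_cases i <;> fin_cases j <;>
      simp [W, s3, sp, sm, Finset.sum_apply, Matrix.sum_apply, mul_neg,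
        Finset.sum_neg_distrib]
  have hWxe : Wx l x = !![∑ m ∈ range (n + 1), l ^ (n - m) * (q x * c m x - r x * b m x),
        ∑ m ∈ range (n + 1), l ^ (n - m) * (-2 * I * b (m + 1) x - 2 * q x * a m x);
        ∑ m ∈ range (n + 1), l ^ (n - m) * (2 * I * c (m + 1) x + 2 * r x * a m x),
        -∑ m ∈ range (n + 1), l ^ (n - m) * (q x * c m x - r x * b m x)] := by
    have hWx' : Wx l x = ∑ m ∈ range (n + 1),
        (l ^ (n - m)) • ((q x * c m x - r x * b m x) • s3 +
          (-2 * I * b (m + 1) x - 2 * q x * a m x) • sp +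
          (2 * I * c (m + 1) x + 2 * r x * a m x) • sm) := by
      refine Finset.sum_congr rfl fun m _ => ?_
      rw [(ha m x).deriv, (hb m x).deriv, (hc m x).deriv]
    rw [hWx']
    ext i j
    fin_cases i <;> fin_cases j <;>
      simp [s3, sp, sm, Finset.sum_apply, Matrix.sum_apply, mul_neg, mul_sub,
        Finset.sum_neg_distrib, Finset.sum_sub_distrib, neg_sub]
  have hUe : U l x = !![-I * l, q x; r x, I * l] := by
    ext i j
    fin_cases i <;> fin_cases j <;> simp [U, s3, sp, sm] <;> ring
  have hRHS : (-2 * I * b (n + 1) x) • sp + (2 * I * c (n + 1) x) • sm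
      = !![0, -2 * I * b (n + 1) x; 2 * I * c (n + 1) x, 0] := by
    ext i j
    fin_cases i <;> fin_cases j <;> simp [sp, sm]
  rw [hWe, hWxe, hUe, hRHS]
  -- key telescoping facts
  have hTB := akns_key l (fun m => b m x) (hb0 x) n
  have hTC := akns_key l (fun m => c m x) (hc0 x) n
  -- distribute the sums
  have hDA : ∑ m ∈ range (n + 1), l ^ (n - m) * (q x * c m x - r x * b m x)
      = q x * (∑ m ∈ range (n + 1), l ^ (n - m) * c m x)
        - r x * (∑ m ∈ range (n + 1), l ^ (n - m) * b m x) := by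
    rw [Finset.mul_sum, Finset.mul_sum, ← Finset.sum_sub_distrib]
    exact Finset.sum_congr rfl fun m _ => by ring
  have hDB : ∑ m ∈ range (n + 1), l ^ (n - m) * (-2 * I * b (m + 1) x - 2 * q x * a m x)
      = (-2 * I) * (∑ m ∈ range (n + 1), l ^ (n - m) * b (m + 1) x)
        - 2 * q x * (∑ m ∈ range (n + 1), l ^ (n - m) * a m x) := by
    rw [Finset.mul_sum, Finset.mul_sum, ← Finset.sum_sub_distrib]
    exact Finset.sum_congr rfl fun m _ => by ring
  have hDC : ∑ m ∈ range (n + 1), l ^ (n - m) * (2 * I * c (m + 1) x + 2 * r x * a m x)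
      = (2 * I) * (∑ m ∈ range (n + 1), l ^ (n - m) * c (m + 1) x)
        + 2 * r x * (∑ m ∈ range (n + 1), l ^ (n - m) * a m x) := by
    rw [Finset.mul_sum, Finset.mul_sum, ← Finset.sum_add_distrib]
    exact Finset.sum_congr rfl fun m _ => by ring
  ext i j
  fin_cases i <;> fin_cases j <;>
    simp only [Matrix.mul_fin_two, Fin.mk_zero, Fin.mk_one, Matrix.sub_apply,
      Matrix.add_apply, Matrix.cons_val', Matrix.cons_val_zero, Matrix.cons_val_one,
      Matrix.head_cons, Matrix.head_fin_const, Matrix.empty_val', Matrix.cons_val_fin_one,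
      Matrix.of_apply, Matrix.cons_val_one, Matrix.head_fin_const]
  · linear_combination hDA
  · linear_combination hDB + 2 * I * hTB
  · linear_combination hDC - 2 * I * hTC
  · linear_combination -hDA
end

section
/- For the Kaup–Newell system, with ρ(n) = (λ^{2n+2}V)₊ = Σ_{j=0}^{n} (a_{2j}λ^{2(n−j)+2}σ₃ + b_{2j+1}λ^{2(n−j)+1}σ₊ + c_{2j+1}λ^{2(n−j)+1}σ₋) and U = −iλ²σ₃ + λqσ₊ + λrσ₋, one has ρ(n)_x − [U, ρ(n)] = λ(b_{2n+1,x} σ₊ + c_{2n+1,x} σ₋), provided the coefficients satisfy the Kaup–Newell recursion relations. -/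
open Complex Matrix Finset

lemma kn_tele (n : ℕ) (l : ℂ) (d : ℕ → ℂ) (h0 : d 0 = 0) :
    ∑ j ∈ range (n+1), d (j+1) * l^(2*(n-j)+1)
      - ∑ j ∈ range (n+1), d j * l^(2*(n-j)+3) = d (n+1) * l := by
  rw [← Finset.sum_sub_distrib]
  have key : ∀ j ∈ Finset.range (n+1),
      d (j+1) * l^(2*(n-j)+1) - d j * l^(2*(n-j)+3)
        = (fun j => d j * l^(2*(n+1-j)+1)) (j+1) - (fun j => d j * l^(2*(n+1-j)+1)) j := by
    intro j hj
    rw [Finset.mem_range] at hj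
    have h1 : n+1-(j+1) = n-j := by omega
    have h2 : 2*(n+1-j)+1 = 2*(n-j)+3 := by omega
    simp only [h1, h2]
  rw [Finset.sum_congr rfl key, Finset.sum_range_sub (fun j => d j * l^(2*(n+1-j)+1))]
  simp [h0]

/-- For the Kaup–Newell system, with `ρ(n) = (λ^{2n+2}V)₊` and
`U = −iλ²σ₃ + λqσ₊ + λrσ₋`, one has
`ρ(n)_x − [U, ρ(n)] = λ(b_{2n+1,x} σ₊ + c_{2n+1,x} σ₋)`, provided the coefficients
satisfy the Kaup–Newell recursion relations.  Here `A j`, `B j`, `C j` denote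
`a_{2j}`, `b_{2j+1}`, `c_{2j+1}` respectively, and the `j = 0` boundary relations
come from `b_{−1} = c_{−1} = 0`. -/
theorem kaup_newell_truncation_identity (n : ℕ) (q r : ℝ → ℂ) (A B C : ℕ → ℝ → ℂ)
    (hA : ∀ j x, HasDerivAt (A j) (q x * C j x - r x * B j x) x)
    (hB : ∀ j x, HasDerivAt (B j) (-2 * I * B (j + 1) x - 2 * q x * A (j + 1) x) x)
    (hC : ∀ j x, HasDerivAt (C j) (2 * I * C (j + 1) x + 2 * r x * A (j + 1) x) x)
    (hbd1 : ∀ x : ℝ, -2 * I * B 0 x - 2 * q x * A 0 x = 0)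
    (hbd2 : ∀ x : ℝ, 2 * I * C 0 x + 2 * r x * A 0 x = 0) :
    let s3 : Matrix (Fin 2) (Fin 2) ℂ := !![1, 0; 0, -1]
    let sp : Matrix (Fin 2) (Fin 2) ℂ := !![0, 1; 0, 0]
    let sm : Matrix (Fin 2) (Fin 2) ℂ := !![0, 0; 1, 0]
    let U : ℂ → ℝ → Matrix (Fin 2) (Fin 2) ℂ := fun l x =>
      (-I * l ^ 2) • s3 + (l * q x) • sp + (l * r x) • sm
    let ρ : ℂ → ℝ → Matrix (Fin 2) (Fin 2) ℂ := fun l x =>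
      ∑ j ∈ range (n + 1),
        ((A j x * l ^ (2 * (n - j) + 2)) • s3 +
          (B j x * l ^ (2 * (n - j) + 1)) • sp +
          (C j x * l ^ (2 * (n - j) + 1)) • sm)
    let ρx : ℂ → ℝ → Matrix (Fin 2) (Fin 2) ℂ := fun l x =>
      ∑ j ∈ range (n + 1),
        ((deriv (A j) x * l ^ (2 * (n - j) + 2)) • s3 +
          (deriv (B j) x * l ^ (2 * (n - j) + 1)) • sp +
          (deriv (C j) x * l ^ (2 * (n - j) + 1)) • sm)
    ∀ (l : ℂ) (x : ℝ),
      ρx l x - (U l x * ρ l x - ρ l x * U l x) =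
        (l * deriv (B n) x) • sp + (l * deriv (C n) x) • sm := by
  intro s3 sp sm U ρ ρx l x
  have dA : ∀ j, deriv (A j) x = q x * C j x - r x * B j x := fun j => (hA j x).deriv
  have dB : ∀ j, deriv (B j) x = -2 * I * B (j+1) x - 2 * q x * A (j+1) x := fun j => (hB j x).deriv
  have dC : ∀ j, deriv (C j) x = 2 * I * C (j+1) x + 2 * r x * A (j+1) x := fun j => (hC j x).deriv
  simp only [ρx, ρ, U, s3, sp, sm, Finset.mul_sum, Finset.sum_mul]
  ext i k
  fin_cases i <;> fin_cases k <;>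
    simp [Matrix.sum_apply, Matrix.mul_apply, Fin.sum_univ_two, dA, dB, dC]
  · -- (0,0)
    rw [sub_eq_zero, ← Finset.sum_sub_distrib]
    exact Finset.sum_congr rfl fun j hj => by ring
  · -- (0,1)
    have key := kn_tele n l (fun j => -2*I*B j x - 2*q x*A j x) (hbd1 x)
    rw [← Finset.sum_sub_distrib] at key
    rw [← Finset.sum_sub_distrib, ← Finset.sum_sub_distrib]
    exact Eq.trans (Finset.sum_congr rfl fun j hj => by ring) (key.trans (by ring))
  · -- (1,0)
    have key := kn_tele n l (fun j => 2*I*C j x + 2*r x*A j x) (hbd2 x)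
    rw [← Finset.sum_sub_distrib] at key
    rw [← Finset.sum_sub_distrib, ← Finset.sum_sub_distrib]
    exact Eq.trans (Finset.sum_congr rfl fun j hj => by ring) (key.trans (by ring))
  · -- (1,1)
    rw [sub_eq_zero, ← Finset.sum_sub_distrib, ← Finset.sum_neg_distrib]
    exact Finset.sum_congr rfl fun j hj => by ring
end
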